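/- (Drucker–Prager plastic correction, converse direction.) Assume f̂(p^tr, ϱ^tr, H(ε̄^{p,tr})) > 0. Let (p, ϱ, ε̄^p, Δλ) solve the reduced system with Δλ > 0, and define σ = σ^tr − Δλ·(G·√2·(s^tr/ϱ^tr) + K·η̄·I) if ϱ^tr > Δλ·G·√2, and σ = (p^tr − Δλ·K·η̄)·I if ϱ^tr ≤ Δλ·G·√2. Then (σ, ε̄^p, Δλ) solves the plastic corrector system: there exists n̂ ∈ ∂ϱ(σ) with σ = σ^tr − Δλ·(G·√2·n̂ + K·η̄·I), ε̄^p = ε̄^{p,tr} + Δλ·ξ, and f̂(p(σ), ϱ(σ), H(ε̄^p)) = 0; moreover p(σ) = p and ϱ(σ) = ϱ. -/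

import Mathlib

open Matrix

noncomputable section

/-- The space of real 3×3 matrices (we restrict to symmetric ones via `Matrix.IsSymm`). -/
abbrev Mat3 := Matrix (Fin 3) (Fin 3) ℝ

/-- Frobenius inner product (for symmetric matrices): ⟨A,B⟩ = tr(A·B). -/
def finner (A B : Mat3) : ℝ := (A * B).trace

/-- Norm induced by `finner` (Frobenius norm on symmetric matrices). -/
def fnorm (A : Mat3) : ℝ := Real.sqrt (finner A A)

/-- Hydrostatic pressure: p(σ) = tr(σ)/3. -/
def pvol (σ : Mat3) : ℝ := σ.trace / 3

/-- Deviatoric part: dev(σ) = σ − p(σ)·I. -/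
def devm (σ : Mat3) : Mat3 := σ - pvol σ • (1 : Mat3)

/-- ϱ(σ) = ‖dev(σ)‖. -/
def rho (σ : Mat3) : ℝ := fnorm (devm σ)

/-- The subdifferential ∂ϱ(σ): symmetric matrices n̂ with
ϱ(τ) ≥ ϱ(σ) + ⟨n̂, τ − σ⟩ for all symmetric τ. -/
def subgradRho (σ : Mat3) : Set Mat3 :=
  {n : Mat3 | n.IsSymm ∧ ∀ τ : Mat3, τ.IsSymm → rho σ + finner n (τ - σ) ≤ rho τ}

/-- Drucker–Prager yield function f̂(p,ϱ,κ) = √(1/2)·ϱ + η·p − ξ·(c₀ + κ). -/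
def fDP (η ξ c0 p ϱ κ : ℝ) : ℝ := Real.sqrt (1/2) * ϱ + η * p - ξ * (c0 + κ)

lemma finner_eq_sum (A B : Mat3) : finner A B = ∑ i, ∑ j, A i j * B j i := by
  simp [finner, Matrix.trace, Matrix.mul_apply, Matrix.diag]

lemma finner_smul_left (c : ℝ) (A B : Mat3) : finner (c • A) B = c * finner A B := by
  simp [finner, Matrix.smul_mul, Matrix.trace_smul, smul_eq_mul]

lemma finner_smul_right (c : ℝ) (A B : Mat3) : finner A (c • B) = c * finner A B := by
  simp [finner, Matrix.mul_smul, Matrix.trace_smul, smul_eq_mul]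

lemma finner_self_nonneg (A : Mat3) (hA : A.IsSymm) : 0 ≤ finner A A := by
  rw [finner_eq_sum]
  apply Finset.sum_nonneg; intro i _
  apply Finset.sum_nonneg; intro j _
  rw [hA.apply i j]; exact mul_self_nonneg _

lemma fnorm_nonneg (A : Mat3) : 0 ≤ fnorm A := Real.sqrt_nonneg _

lemma sq_fnorm (A : Mat3) (hA : A.IsSymm) : fnorm A ^ 2 = finner A A :=
  Real.sq_sqrt (finner_self_nonneg A hA)

lemma fnorm_smul (c : ℝ) (hc : 0 ≤ c) (A : Mat3) : fnorm (c • A) = c * fnorm A := by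
  rw [fnorm, finner_smul_left, finner_smul_right, ← mul_assoc, fnorm,
    Real.sqrt_mul (by positivity), Real.sqrt_mul_self hc]

lemma finner_le_norm (A B : Mat3) (hA : A.IsSymm) (hB : B.IsSymm) :
    finner A B ≤ fnorm A * fnorm B := by
  have h1 : finner A B = ∑ p : Fin 3 × Fin 3, A p.1 p.2 * B p.1 p.2 := by
    rw [finner_eq_sum, Fintype.sum_prod_type]
    exact Finset.sum_congr rfl fun i _ => Finset.sum_congr rfl fun j _ => by
      rw [hB.apply i j]
  have h2 : finner A A = ∑ p : Fin 3 × Fin 3, (A p.1 p.2) ^ 2 := by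
    rw [finner_eq_sum, Fintype.sum_prod_type]
    exact Finset.sum_congr rfl fun i _ => Finset.sum_congr rfl fun j _ => by
      rw [hA.apply i j, sq]
  have h3 : finner B B = ∑ p : Fin 3 × Fin 3, (B p.1 p.2) ^ 2 := by
    rw [finner_eq_sum, Fintype.sum_prod_type]
    exact Finset.sum_congr rfl fun i _ => Finset.sum_congr rfl fun j _ => by
      rw [hB.apply i j, sq]
  rw [h1, fnorm, fnorm, h2, h3]
  exact Real.sum_mul_le_sqrt_mul_sqrt _ _ _

lemma trace_devm (σ : Mat3) : (devm σ).trace = 0 := by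
  simp only [devm, Matrix.trace_sub, Matrix.trace_smul, Matrix.trace_one, smul_eq_mul, pvol,
    Fintype.card_fin]
  push_cast
  ring

lemma devm_isSymm {σ : Mat3} (h : σ.IsSymm) : (devm σ).IsSymm :=
  h.sub ((Matrix.isSymm_one).smul _)

lemma mem_subgrad (σ n : Mat3) (hn : n.IsSymm) (htr : n.trace = 0)
    (hnorm : fnorm n ≤ 1) (hval : finner n (devm σ) = rho σ) : n ∈ subgradRho σ := by
  refine ⟨hn, fun τ hτ => ?_⟩
  have hdecomp : τ - σ = devm τ - devm σ + (pvol τ - pvol σ) • (1 : Mat3) := by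
    simp only [devm, sub_smul]; abel
  have h1 : finner n (τ - σ) = finner n (devm τ) - finner n (devm σ) := by
    rw [hdecomp]
    simp [finner, Matrix.mul_add, Matrix.mul_sub, Matrix.mul_smul, Matrix.trace_add,
      Matrix.trace_sub, Matrix.trace_smul, htr, smul_eq_mul]
  have h2 : finner n (devm τ) ≤ rho τ := by
    calc finner n (devm τ) ≤ fnorm n * fnorm (devm τ) :=
          finner_le_norm _ _ hn (devm_isSymm hτ)
      _ ≤ 1 * fnorm (devm τ) := by
          exact mul_le_mul_of_nonneg_right hnorm (fnorm_nonneg _)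
      _ = rho τ := by rw [one_mul]; rfl
  rw [h1, hval]
  linarith

/-- Drucker–Prager plastic correction, converse direction. -/
theorem DP_plastic_corrector_converse
    (G K η ηb ξ c0 : ℝ)
    (hG : 0 < G) (hK : 0 < K) (hη : 0 < η) (hηb : 0 < ηb) (hξ : 0 < ξ) (hc0 : 0 < c0)
    (H : ℝ → ℝ) (Hmono : MonotoneOn H (Set.Ici 0))
    (Hcont : ContinuousOn H (Set.Ici 0)) (H0 : H 0 = 0) (Hnn : ∀ x ≥ (0:ℝ), 0 ≤ H x)
    (σtr : Mat3) (hσtr : σtr.IsSymm) (εtr : ℝ) (hεtr : 0 ≤ εtr)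
    (htrial : 0 < fDP η ξ c0 (pvol σtr) (rho σtr) (H εtr))
    (p ϱ εp Δl : ℝ) (hεp : 0 ≤ εp) (hΔl : 0 < Δl)
    (hpeq : p = pvol σtr - Δl * K * ηb)
    (hϱeq : ϱ = max 0 (rho σtr - Δl * G * Real.sqrt 2))
    (hεeq : εp = εtr + Δl * ξ)
    (hfred : fDP η ξ c0 p ϱ (H εp) = 0)
    (σ : Mat3)
    (hσdef : σ = if Δl * G * Real.sqrt 2 < rho σtr then
        σtr - Δl • ((G * Real.sqrt 2) • ((rho σtr)⁻¹ • devm σtr) + (K * ηb) • (1 : Mat3))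
      else
        (pvol σtr - Δl * K * ηb) • (1 : Mat3)) :
    pvol σ = p ∧ rho σ = ϱ ∧
    (∃ n ∈ subgradRho σ,
      σ = σtr - Δl • ((G * Real.sqrt 2) • n + (K * ηb) • (1 : Mat3))) ∧
    εp = εtr + Δl * ξ ∧
    fDP η ξ c0 (pvol σ) (rho σ) (H εp) = 0 := by
  set s : Mat3 := devm σtr with hs
  set r : ℝ := rho σtr with hr
  have hs_symm : s.IsSymm := devm_isSymm hσtr
  have hstr : s.trace = 0 := trace_devm σtr
  have hr0 : 0 ≤ r := fnorm_nonneg _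
  have hss : finner s s = r ^ 2 := (sq_fnorm s hs_symm).symm
  have hsqrt2 : 0 < Real.sqrt 2 := Real.sqrt_pos.mpr (by norm_num)
  have hfs : fnorm s = r := rfl
  by_cases h : Δl * G * Real.sqrt 2 < r
  · -- smooth case
    have hrpos : 0 < r := lt_trans (by positivity) h
    have hrne : r ≠ 0 := ne_of_gt hrpos
    have hσ' : σ = σtr - (Δl * (G * Real.sqrt 2) * r⁻¹) • s - (Δl * (K * ηb)) • (1 : Mat3) := by
      rw [hσdef, if_pos h]
      module
    have hpσ : pvol σ = pvol σtr - Δl * K * ηb := by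
      rw [hσ']
      simp [pvol, Matrix.trace_sub, Matrix.trace_smul, hstr, Matrix.trace_one, smul_eq_mul]
      ring
    have hc1 : Δl * (G * Real.sqrt 2) * r⁻¹ < 1 := by
      rw [← mul_lt_mul_iff_of_pos_right hrpos, one_mul, mul_assoc, inv_mul_cancel₀ hrne, mul_one,
        ← mul_assoc]
      exact h
    have hc0' : 0 ≤ 1 - Δl * (G * Real.sqrt 2) * r⁻¹ := by linarith
    have hdev : devm σ = (1 - Δl * (G * Real.sqrt 2) * r⁻¹) • s := by
      rw [devm, hpσ, hσ']
      rw [hs, devm]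
      module
    have hrhoσ : rho σ = r - Δl * G * Real.sqrt 2 := by
      rw [rho, hdev, fnorm_smul _ hc0', hfs]
      field_simp
    have hϱ' : ϱ = r - Δl * G * Real.sqrt 2 := by
      rw [hϱeq, max_eq_right (by linarith)]
    refine ⟨by rw [hpσ, hpeq], by rw [hrhoσ, hϱ'], ⟨r⁻¹ • s, ?_, ?_⟩, hεeq, ?_⟩
    · apply mem_subgrad _ _ (hs_symm.smul _) (by simp [Matrix.trace_smul, hstr, smul_eq_mul])
      · rw [fnorm_smul _ (by positivity), hfs, inv_mul_cancel₀ hrne]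
      · rw [hdev, finner_smul_left, finner_smul_right, hss, hrhoσ]
        field_simp
        try ring
    · rw [hσdef, if_pos h]
    · rw [hpeq, hϱ'] at hfred
      rw [hpσ, hrhoσ]
      exact hfred
  · -- apex case
    push_neg at h
    have hσ' : σ = (pvol σtr - Δl * K * ηb) • (1 : Mat3) := by rw [hσdef, if_neg (not_lt.mpr h)]
    have hpσ : pvol σ = pvol σtr - Δl * K * ηb := by
      rw [hσ']
      simp [pvol, Matrix.trace_smul, Matrix.trace_one, smul_eq_mul]
    have hdev : devm σ = 0 := by
      rw [devm, hpσ, hσ']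
      module
    have hrhoσ : rho σ = 0 := by
      rw [rho, hdev, fnorm, finner]
      simp
    have hϱ' : ϱ = 0 := by rw [hϱeq, max_eq_left (by linarith)]
    have hd : (0:ℝ) < Δl * (G * Real.sqrt 2) := by positivity
    have hdne : Δl * (G * Real.sqrt 2) ≠ 0 := ne_of_gt hd
    refine ⟨by rw [hpσ, hpeq], by rw [hrhoσ, hϱ'], ⟨(Δl * (G * Real.sqrt 2))⁻¹ • s, ?_, ?_⟩,
      hεeq, ?_⟩
    · apply mem_subgrad _ _ (hs_symm.smul _) (by simp [Matrix.trace_smul, hstr, smul_eq_mul])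
      · rw [fnorm_smul _ (by positivity), hfs]
        rw [inv_mul_le_iff₀ hd, mul_one]
        calc r ≤ Δl * G * Real.sqrt 2 := h
          _ = Δl * (G * Real.sqrt 2) := by ring
      · rw [hdev, hrhoσ]
        simp [finner]
    · rw [hσ']
      have key : Δl • ((G * Real.sqrt 2) • ((Δl * (G * Real.sqrt 2))⁻¹ • s)
          + (K * ηb) • (1 : Mat3))
          = (Δl * (G * Real.sqrt 2) * (Δl * (G * Real.sqrt 2))⁻¹) • s
            + (Δl * (K * ηb)) • (1 : Mat3) := by module
      rw [key, mul_inv_cancel₀ hdne, one_smul]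
      rw [hs, devm]
      module
    · rw [hpeq, hϱ'] at hfred
      rw [hpσ, hrhoσ]
      exact hfred
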